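/- Let p > 0 be a real number that is not an integer, and let A be a real n×n matrix such that ‖Ax‖_p = ‖x‖_p for all x ∈ ℝ^n. Then A is a signed permutation matrix. -/
import Mathlib


/-- The `p`-norm of a real vector: `‖x‖_p = (Σ_j |x_j|^p)^(1/p)` (real exponents). -/
noncomputable def pNorm {n : ℕ} (p : ℝ) (x : Fin n → ℝ) : ℝ :=
  (∑ j, |x j| ^ p) ^ (1 / p)

/-- `A` is a signed permutation matrix: there are a permutation `σ` and signs
`ε_j ∈ {−1,+1}` with `A j k = ε j` if `k = σ j` and `A j k = 0` otherwise. -/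
def IsSignedPermMatrix {n : ℕ} (A : Matrix (Fin n) (Fin n) ℝ) : Prop :=
  ∃ σ : Equiv.Perm (Fin n), ∃ ε : Fin n → ℝ,
    (∀ j, ε j = 1 ∨ ε j = -1) ∧ ∀ j k, A j k = if k = σ j then ε j else 0

section Aux

lemma rpow_superadd {q x y : ℝ} (hq : 1 < q) (hx : 0 < x) (hy : 0 < y) :
    x ^ q + y ^ q < (x + y) ^ q := by
  have hxy : 0 < x + y := by linarith
  have e : ∀ z : ℝ, 0 < z → z * z ^ (q - 1) = z ^ q := by
    intro z hz
    rw [Real.rpow_sub_one hz.ne']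
    field_simp
  have h1 : x ^ (q - 1) < (x + y) ^ (q - 1) :=
    Real.rpow_lt_rpow hx.le (by linarith) (by linarith)
  have h2 : y ^ (q - 1) < (x + y) ^ (q - 1) :=
    Real.rpow_lt_rpow hy.le (by linarith) (by linarith)
  have hx1 : x ^ q < x * (x + y) ^ (q - 1) := by
    rw [← e x hx]; exact mul_lt_mul_of_pos_left h1 hx
  have hy1 : y ^ q < y * (x + y) ^ (q - 1) := by
    rw [← e y hy]; exact mul_lt_mul_of_pos_left h2 hy
  have : x * (x + y) ^ (q - 1) + y * (x + y) ^ (q - 1) = (x + y) ^ q := by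
    rw [← e (x + y) hxy]; ring
  linarith

lemma rpow_subadd {q x y : ℝ} (hq0 : 0 < q) (hq : q < 1) (hx : 0 < x) (hy : 0 < y) :
    (x + y) ^ q < x ^ q + y ^ q := by
  have hxy : 0 < x + y := by linarith
  have e : ∀ z : ℝ, 0 < z → z * z ^ (q - 1) = z ^ q := by
    intro z hz
    rw [Real.rpow_sub_one hz.ne']
    field_simp
  have h1 : (x + y) ^ (q - 1) < x ^ (q - 1) :=
    Real.rpow_lt_rpow_of_neg hx (by linarith) (by linarith)
  have h2 : (x + y) ^ (q - 1) < y ^ (q - 1) :=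
    Real.rpow_lt_rpow_of_neg hy (by linarith) (by linarith)
  have hx1 : x * (x + y) ^ (q - 1) < x ^ q := by
    rw [← e x hx]; exact mul_lt_mul_of_pos_left h1 hx
  have hy1 : y * (x + y) ^ (q - 1) < y ^ q := by
    rw [← e y hy]; exact mul_lt_mul_of_pos_left h2 hy
  have : x * (x + y) ^ (q - 1) + y * (x + y) ^ (q - 1) = (x + y) ^ q := by
    rw [← e (x + y) hxy]; ring
  linarith

lemma midpoint_convex_rpow {q x y : ℝ} (hq : 1 ≤ q) (hx : 0 ≤ x) (hy : 0 ≤ y) :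
    2 * ((x + y) / 2) ^ q ≤ x ^ q + y ^ q := by
  have h := (convexOn_rpow hq).2 (Set.mem_Ici.mpr hx) (Set.mem_Ici.mpr hy)
    (by norm_num : (0:ℝ) ≤ 1/2) (by norm_num : (0:ℝ) ≤ 1/2) (by norm_num)
  simp only [smul_eq_mul] at h
  have e : (1/2 : ℝ) * x + (1/2) * y = (x + y) / 2 := by ring
  rw [e] at h
  linarith

lemma midpoint_concave_rpow {q x y : ℝ} (hq0 : 0 ≤ q) (hq : q ≤ 1) (hx : 0 ≤ x) (hy : 0 ≤ y) :
    x ^ q + y ^ q ≤ 2 * ((x + y) / 2) ^ q := by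
  have h := (Real.concaveOn_rpow hq0 hq).2 (Set.mem_Ici.mpr hx) (Set.mem_Ici.mpr hy)
    (by norm_num : (0:ℝ) ≤ 1/2) (by norm_num : (0:ℝ) ≤ 1/2) (by norm_num)
  simp only [smul_eq_mul] at h
  have e : (1/2 : ℝ) * x + (1/2) * y = (x + y) / 2 := by ring
  rw [e] at h
  linarith

lemma abs_rpow_eq_sq_rpow {p : ℝ} (x : ℝ) : |x| ^ p = (x ^ 2) ^ (p / 2) := by
  rw [← sq_abs, ← Real.rpow_natCast |x| 2, ← Real.rpow_mul (abs_nonneg x)]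
  norm_num
  rw [show (2:ℝ) * (p/2) = p by ring]

lemma clarkson_lt_low {p a b : ℝ} (hp0 : 0 < p) (hp2 : p < 2) (ha : a ≠ 0) (hb : b ≠ 0) :
    |a + b| ^ p + |a - b| ^ p < 2 * |a| ^ p + 2 * |b| ^ p := by
  have hq0 : 0 < p / 2 := by linarith
  have hq1 : p / 2 < 1 := by linarith
  have ha2 : 0 < a ^ 2 := by positivity
  have hb2 : 0 < b ^ 2 := by positivity
  calc |a + b| ^ p + |a - b| ^ p
      = ((a + b) ^ 2) ^ (p/2) + ((a - b) ^ 2) ^ (p/2) := by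
        rw [abs_rpow_eq_sq_rpow, abs_rpow_eq_sq_rpow]
    _ ≤ 2 * (((a + b) ^ 2 + (a - b) ^ 2) / 2) ^ (p/2) :=
        midpoint_concave_rpow hq0.le hq1.le (by positivity) (by positivity)
    _ = 2 * (a ^ 2 + b ^ 2) ^ (p/2) := by
        rw [show ((a + b) ^ 2 + (a - b) ^ 2) / 2 = a ^ 2 + b ^ 2 by ring]
    _ < 2 * ((a ^ 2) ^ (p/2) + (b ^ 2) ^ (p/2)) := by
        have := rpow_subadd hq0 hq1 ha2 hb2; linarith
    _ = 2 * |a| ^ p + 2 * |b| ^ p := by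
        rw [abs_rpow_eq_sq_rpow a, abs_rpow_eq_sq_rpow b]; ring

lemma clarkson_le_low {p : ℝ} (hp0 : 0 < p) (hp2 : p < 2) (a b : ℝ) :
    |a + b| ^ p + |a - b| ^ p ≤ 2 * |a| ^ p + 2 * |b| ^ p := by
  rcases eq_or_ne a 0 with rfl | ha
  · simp [abs_neg, Real.zero_rpow hp0.ne']; ring_nf; linarith [Real.rpow_nonneg (abs_nonneg b) p]
  rcases eq_or_ne b 0 with rfl | hb
  · simp [Real.zero_rpow hp0.ne']; linarith [Real.rpow_nonneg (abs_nonneg a) p]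
  · exact (clarkson_lt_low hp0 hp2 ha hb).le

lemma clarkson_lt_high {p a b : ℝ} (hp2 : 2 < p) (ha : a ≠ 0) (hb : b ≠ 0) :
    2 * |a| ^ p + 2 * |b| ^ p < |a + b| ^ p + |a - b| ^ p := by
  have hq1 : 1 < p / 2 := by linarith
  have ha2 : 0 < a ^ 2 := by positivity
  have hb2 : 0 < b ^ 2 := by positivity
  calc 2 * |a| ^ p + 2 * |b| ^ p
      = 2 * ((a ^ 2) ^ (p/2) + (b ^ 2) ^ (p/2)) := by
        rw [abs_rpow_eq_sq_rpow a, abs_rpow_eq_sq_rpow b]; ring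
    _ < 2 * (a ^ 2 + b ^ 2) ^ (p/2) := by
        have := rpow_superadd hq1 ha2 hb2; linarith
    _ = 2 * (((a + b) ^ 2 + (a - b) ^ 2) / 2) ^ (p/2) := by
        rw [show ((a + b) ^ 2 + (a - b) ^ 2) / 2 = a ^ 2 + b ^ 2 by ring]
    _ ≤ ((a + b) ^ 2) ^ (p/2) + ((a - b) ^ 2) ^ (p/2) :=
        midpoint_convex_rpow hq1.le (by positivity) (by positivity)
    _ = |a + b| ^ p + |a - b| ^ p := by
        rw [abs_rpow_eq_sq_rpow, abs_rpow_eq_sq_rpow]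

lemma clarkson_le_high {p : ℝ} (hp0 : 0 < p) (hp2 : 2 < p) (a b : ℝ) :
    2 * |a| ^ p + 2 * |b| ^ p ≤ |a + b| ^ p + |a - b| ^ p := by
  rcases eq_or_ne a 0 with rfl | ha
  · simp [abs_neg, Real.zero_rpow hp0.ne']; ring_nf; linarith [Real.rpow_nonneg (abs_nonneg b) p]
  rcases eq_or_ne b 0 with rfl | hb
  · simp [Real.zero_rpow hp0.ne']; linarith [Real.rpow_nonneg (abs_nonneg a) p]
  · exact (clarkson_lt_high hp2 ha hb).le

end Aux

/-- If `p > 0` is a real number that is not an integer and `A` preserves the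
`p`-norm of every real vector, then `A` is a signed permutation matrix. -/
theorem nonintegral_pnorm_preserving_is_signed_perm {n : ℕ} (p : ℝ) (hppos : 0 < p)
    (hpnotint : ¬ ∃ m : ℤ, (m : ℝ) = p) (A : Matrix (Fin n) (Fin n) ℝ)
    (hA : ∀ x : Fin n → ℝ, pNorm p (A.mulVec x) = pNorm p x) :
    IsSignedPermMatrix A := by
  classical
  have hp2 : p ≠ 2 := fun h => hpnotint ⟨2, by rw [h]; norm_num⟩
  have cancel : ∀ S : ℝ, 0 ≤ S → (S ^ (1 / p)) ^ p = S := by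
    intro S hS
    rw [← Real.rpow_mul hS, one_div_mul_cancel hppos.ne', Real.rpow_one]
  have hsum : ∀ x : Fin n → ℝ, ∑ j, |A.mulVec x j| ^ p = ∑ j, |x j| ^ p := by
    intro x
    have h := hA x
    simp only [pNorm] at h
    have h1 : (0:ℝ) ≤ ∑ j, |A.mulVec x j| ^ p :=
      Finset.sum_nonneg fun _ _ => Real.rpow_nonneg (abs_nonneg _) _
    have h2 : (0:ℝ) ≤ ∑ j, |x j| ^ p :=
      Finset.sum_nonneg fun _ _ => Real.rpow_nonneg (abs_nonneg _) _
    calc ∑ j, |A.mulVec x j| ^ p = ((∑ j, |A.mulVec x j| ^ p) ^ (1/p)) ^ p :=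
          (cancel _ h1).symm
      _ = ((∑ j, |x j| ^ p) ^ (1/p)) ^ p := by rw [h]
      _ = ∑ j, |x j| ^ p := cancel _ h2
  have hcol : ∀ k, ∑ j, |A j k| ^ p = 1 := by
    intro k
    have h := hsum ((Pi.single k 1 : Fin n → ℝ))
    have l1 : ∑ j, |A.mulVec ((Pi.single k 1 : Fin n → ℝ)) j| ^ p = ∑ j, |A j k| ^ p := by
      apply Finset.sum_congr rfl
      intro j _
      rw [show A.mulVec ((Pi.single k 1 : Fin n → ℝ)) j = A j k by rw [Matrix.mulVec_single]; exact mul_one _]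
    have l2 : ∑ j, |(Pi.single k 1 : Fin n → ℝ) j| ^ p = 1 := by
      rw [Finset.sum_eq_single k]
      · simp
      · intro j _ hj; simp [Pi.single_apply, hj, Real.zero_rpow hppos.ne']
      · simp
    rw [l1, l2] at h
    exact h
  have hpair : ∀ k l, k ≠ l → ∀ c : ℝ, |c| = 1 →
      ∑ j, |A j k + c * A j l| ^ p = 2 := by
    intro k l hkl c hc
    have h := hsum (Pi.single k 1 + Pi.single l c : Fin n → ℝ)
    have e1 : ∀ j, A.mulVec (Pi.single k 1 + Pi.single l c : Fin n → ℝ) j = A j k + c * A j l := by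
      intro j
      rw [Matrix.mulVec_add]
      simp [Matrix.mulVec_single, mul_comm]
    have l1 : ∑ j, |A.mulVec (Pi.single k 1 + Pi.single l c : Fin n → ℝ) j| ^ p
        = ∑ j, |A j k + c * A j l| ^ p := by
      apply Finset.sum_congr rfl
      intro j _
      rw [e1]
    have l2 : ∑ j, |(Pi.single k 1 + Pi.single l c : Fin n → ℝ) j| ^ p = 2 := by
      have e2 : ∀ j, |(Pi.single k 1 + Pi.single l c : Fin n → ℝ) j| ^ p
          = (if j = k then 1 else 0) + (if j = l then 1 else 0) := by
        intro j
        rcases eq_or_ne j k with rfl | hjk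
        · simp [Pi.single_apply, hkl, Ne.symm hkl]
        rcases eq_or_ne j l with rfl | hjl
        · simp [Pi.single_apply, hjk, hc]
        · simp [Pi.single_apply, hjk, hjl, Real.zero_rpow hppos.ne']
      rw [Finset.sum_congr rfl (fun j _ => e2 j), Finset.sum_add_distrib]
      simp
      norm_num
    rw [l1, l2] at h
    exact h
  have hdisj : ∀ k l, k ≠ l → ∀ j, A j k = 0 ∨ A j l = 0 := by
    intro k l hkl j
    have h1 : ∑ j, |A j k + A j l| ^ p = 2 := by
      have := hpair k l hkl 1 (by norm_num)
      simpa using this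
    have h2 : ∑ j, |A j k - A j l| ^ p = 2 := by
      have := hpair k l hkl (-1) (by norm_num)
      simp only [neg_one_mul, ← sub_eq_add_neg] at this
      exact this
    by_contra hcon
    push_neg at hcon
    obtain ⟨hak, hal⟩ := hcon
    rcases lt_or_gt_of_ne hp2 with hlt | hgt
    · -- p < 2 : termwise LHS ≤ RHS, strict at j, but sums are equal
      have hterm : ∀ i ∈ Finset.univ, |A i k + A i l| ^ p + |A i k - A i l| ^ p
          ≤ 2 * |A i k| ^ p + 2 * |A i l| ^ p :=
        fun i _ => clarkson_le_low hppos hlt _ _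
      have hstrict : ∑ i, (|A i k + A i l| ^ p + |A i k - A i l| ^ p)
          < ∑ i, (2 * |A i k| ^ p + 2 * |A i l| ^ p) :=
        Finset.sum_lt_sum hterm ⟨j, Finset.mem_univ j, clarkson_lt_low hppos hlt hak hal⟩
      rw [Finset.sum_add_distrib, Finset.sum_add_distrib, h1, h2, ← Finset.mul_sum,
        ← Finset.mul_sum, hcol k, hcol l] at hstrict
      norm_num at hstrict
    · have hterm : ∀ i ∈ Finset.univ, 2 * |A i k| ^ p + 2 * |A i l| ^ p
          ≤ |A i k + A i l| ^ p + |A i k - A i l| ^ p :=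
        fun i _ => clarkson_le_high hppos hgt _ _
      have hstrict : ∑ i, (2 * |A i k| ^ p + 2 * |A i l| ^ p)
          < ∑ i, (|A i k + A i l| ^ p + |A i k - A i l| ^ p) :=
        Finset.sum_lt_sum hterm ⟨j, Finset.mem_univ j, clarkson_lt_high hgt hak hal⟩
      rw [Finset.sum_add_distrib, Finset.sum_add_distrib, h1, h2, ← Finset.mul_sum,
        ← Finset.mul_sum, hcol k, hcol l] at hstrict
      norm_num at hstrict
  -- supports
  set T : Fin n → Finset (Fin n) := fun k => Finset.univ.filter fun j => A j k ≠ 0 with hT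
  have hTne : ∀ k, (T k).Nonempty := by
    intro k
    by_contra h
    rw [Finset.not_nonempty_iff_eq_empty, Finset.filter_eq_empty_iff] at h
    have : ∑ j, |A j k| ^ p = 0 := Finset.sum_eq_zero fun j hj => by
      have := h hj
      push_neg at this
      simp [this, Real.zero_rpow hppos.ne']
    rw [hcol k] at this
    norm_num at this
  have hTdisj : ∀ x ∈ (Finset.univ : Finset (Fin n)), ∀ y ∈ Finset.univ, x ≠ y →
      Disjoint (T x) (T y) := by
    intro x _ y _ hxy
    rw [Finset.disjoint_left]
    intro j hjx hjy
    simp only [hT, Finset.mem_filter] at hjx hjy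
    rcases hdisj x y hxy j with h | h
    · exact hjx.2 h
    · exact hjy.2 h
  have hcardsum : ∑ k, (T k).card ≤ n := by
    rw [← Finset.card_biUnion hTdisj]
    calc (Finset.univ.biUnion T).card ≤ (Finset.univ : Finset (Fin n)).card :=
          Finset.card_le_univ _
      _ = n := Finset.card_fin n
  have hcard1 : ∀ k, (T k).card = 1 := by
    intro k
    by_contra hk
    have h2 : 2 ≤ (T k).card := by
      have := Finset.card_pos.mpr (hTne k)
      omega
    have hlt : ∑ _k : Fin n, 1 < ∑ k, (T k).card :=
      Finset.sum_lt_sum (fun i _ => Finset.card_pos.mpr (hTne i)) ⟨k, Finset.mem_univ k, by omega⟩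
    simp only [Finset.sum_const, Finset.card_univ, Fintype.card_fin, smul_eq_mul, mul_one] at hlt
    omega
  choose τ hτ using fun k => Finset.card_eq_one.mp (hcard1 k)
  have hmem : ∀ j k, A j k ≠ 0 ↔ j = τ k := by
    intro j k
    rw [← Finset.mem_singleton, ← hτ k]
    simp [hT]
  have hinj : Function.Injective τ := by
    intro k l h
    by_contra hkl
    have h1 : A (τ k) k ≠ 0 := (hmem _ _).mpr rfl
    have h2 : A (τ k) l ≠ 0 := (hmem _ _).mpr (by rw [h])
    rcases hdisj k l hkl (τ k) with h | h
    · exact h1 h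
    · exact h2 h
  let eτ : Fin n ≃ Fin n := Equiv.ofBijective τ (Finite.injective_iff_bijective.mp hinj)
  have heτ : ∀ k, eτ k = τ k := fun k => rfl
  refine ⟨eτ.symm, fun j => A j (eτ.symm j), ?_, ?_⟩
  · intro j
    set k := eτ.symm j with hk
    have hjk : j = τ k := by
      rw [← heτ k, hk, Equiv.apply_symm_apply]
    have hone : |A j k| ^ p = 1 := by
      have h := hcol k
      rw [Finset.sum_eq_single j] at h
      · exact h
      · intro j' _ hj'
        have hz : A j' k = 0 := by
          by_contra hc
          exact hj' (((hmem j' k).mp hc).trans hjk.symm)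
        simp [hz, Real.zero_rpow hppos.ne']
      · intro h'; exact absurd (Finset.mem_univ j) h'
    have habs : |A j k| = 1 := by
      have h0 : (0:ℝ) ≤ |A j k| := abs_nonneg _
      have e : (|A j k| ^ p) ^ (1/p) = |A j k| := by
        rw [← Real.rpow_mul h0, mul_one_div_cancel hppos.ne', Real.rpow_one]
      rw [hone, Real.one_rpow] at e
      exact e.symm
    exact (abs_eq zero_le_one).mp habs
  · intro j k
    by_cases h : k = eτ.symm j
    · rw [if_pos h, h]
    · rw [if_neg h]
      by_contra hc
      have hjτ : j = τ k := (hmem j k).mp hc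
      have : eτ.symm j = k := by rw [hjτ, ← heτ k, Equiv.symm_apply_apply]
      exact h this.symm
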